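/- Let G be a metrizable locally compact group, 𝒜 a C*-subalgebra of LUC(G), and T ⊆ G an 𝒜-interpolation set. Then for every ε > 0 there is a neighbourhood V of the identity such that for every function f : T → 𝕋 (the unit circle) there exists φ ∈ 𝒜 with |φ(ut) − f(t)| < ε for every t ∈ T and every u ∈ V. -/

import Mathlib

open Set

namespace Kop

variable {α : Type*}

structure Chain (ℬ : ℕ → Set (Set α)) : Prop where
  mono : ∀ {m n : ℕ}, m ≤ n → ℬ m ⊆ ℬ n
  compl : ∀ {n : ℕ} {S : Set α}, S ∈ ℬ n → Sᶜ ∈ ℬ n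
  inter : ∀ {n : ℕ} {S S' : Set α}, S ∈ ℬ n → S' ∈ ℬ n → S ∩ S' ∈ ℬ n
  cover : ∀ S : Set α, ∃ n, S ∈ ℬ n

namespace Chain

variable {ℬ : ℕ → Set (Set α)}

theorem union (h : Chain ℬ) {n : ℕ} {S S' : Set α} (hS : S ∈ ℬ n) (hS' : S' ∈ ℬ n) : S ∪ S' ∈ ℬ n := by
  have := h.compl (h.inter (h.compl hS) (h.compl hS'))
  simpa [compl_inter, compl_compl] using this

theorem diff (h : Chain ℬ) {n : ℕ} {S S' : Set α} (hS : S ∈ ℬ n) (hS' : S' ∈ ℬ n) : S \ S' ∈ ℬ n := by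
  have := h.inter hS (h.compl hS')
  simpa [diff_eq] using this

end Chain

/-- `W` is `k`-full : every subset of `W` is the trace of a member of `ℬ k`. -/
def full (ℬ : ℕ → Set (Set α)) (k : ℕ) (W : Set α) : Prop :=
  ∀ C ⊆ W, ∃ B ∈ ℬ k, C = B ∩ W

def bdd (ℬ : ℕ → Set (Set α)) (W : Set α) : Prop := ∃ k, full ℬ k W

namespace Chain

variable {ℬ : ℕ → Set (Set α)}

theorem full_mono (h : Chain ℬ) {k k' : ℕ} (hk : k ≤ k') {W : Set α} (hf : full ℬ k W) : full ℬ k' W :=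
  fun C hC => by obtain ⟨B, hB, hBe⟩ := hf C hC; exact ⟨B, h.mono hk hB, hBe⟩

theorem bdd_subset {W W' : Set α} (hsub : W' ⊆ W) (hW : bdd ℬ W) : bdd ℬ W' := by
  obtain ⟨k, hk⟩ := hW
  refine ⟨k, fun C hC => ?_⟩
  obtain ⟨B, hB, hBe⟩ := hk C (hC.trans hsub)
  refine ⟨B, hB, ?_⟩
  ext x
  constructor
  · intro hx
    have hx' : x ∈ B ∩ W := hBe ▸ hx
    exact ⟨hx'.1, hC hx⟩
  · rintro ⟨hx1, hx2⟩
    have : x ∈ B ∩ W := ⟨hx1, hsub hx2⟩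
    rw [← hBe] at this
    exact this

theorem bdd_union (h : Chain ℬ) {X Y : Set α} (hX : bdd ℬ X) (hY : bdd ℬ Y) : bdd ℬ (X ∪ Y) := by
  obtain ⟨kx, hkx⟩ := hX
  obtain ⟨ky, hky⟩ := hY
  obtain ⟨km, hkm⟩ := h.cover X
  set K := max (max kx ky) km with hK
  refine ⟨K, fun C hC => ?_⟩
  obtain ⟨B1, hB1, hB1e⟩ := hkx (C ∩ X) inter_subset_right
  have hCY : C \ X ⊆ Y := by
    intro x hx
    rcases hC hx.1 with hx' | hx'
    · exact absurd hx' hx.2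
    · exact hx'
  obtain ⟨B2, hB2, hB2e⟩ := hky (C \ X) hCY
  have hXmem : X ∈ ℬ K := h.mono (le_max_right _ _) hkm
  have hB1' : B1 ∈ ℬ K := h.mono ((le_max_left kx ky).trans (le_max_left _ _)) hB1
  have hB2' : B2 ∈ ℬ K := h.mono ((le_max_right kx ky).trans (le_max_left _ _)) hB2
  refine ⟨(B1 ∩ X) ∪ (B2 \ X), h.union (h.inter hB1' hXmem) (h.diff hB2' hXmem), ?_⟩
  ext x
  constructor
  · intro hx
    by_cases hxX : x ∈ X
    · have hx1 : x ∈ B1 ∩ X := hB1e ▸ (⟨hx, hxX⟩ : x ∈ C ∩ X)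
      exact ⟨Or.inl hx1, Or.inl hxX⟩
    · have hx2 : x ∈ B2 ∩ Y := hB2e ▸ (⟨hx, hxX⟩ : x ∈ C \ X)
      exact ⟨Or.inr ⟨hx2.1, hxX⟩, Or.inr hx2.2⟩
  · rintro ⟨hxB, hxXY⟩
    rcases hxB with hx1 | hx2
    · have : x ∈ C ∩ X := by rw [hB1e]; exact hx1
      exact this.1
    · have hxY : x ∈ Y := by
        rcases hxXY with hh | hh
        · exact absurd hh hx2.2
        · exact hh
      have : x ∈ C \ X := by rw [hB2e]; exact ⟨hx2.1, hxY⟩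
      exact this.1

end Chain
end Kop

namespace Kop

variable {α : Type*}

/-- trace membership at level `k` relative to ambient set `R`. -/
def Tr (ℬ : ℕ → Set (Set α)) (R : Set α) (k : ℕ) (C : Set α) : Prop :=
  ∃ B ∈ ℬ k, C = B ∩ R

namespace Chain

variable {ℬ : ℕ → Set (Set α)} {R : Set α}

theorem Tr_mono (h : Chain ℬ) {k k' : ℕ} (hk : k ≤ k') {C : Set α} (hC : Tr ℬ R k C) :
    Tr ℬ R k' C := by obtain ⟨B, hB, hBe⟩ := hC; exact ⟨B, h.mono hk hB, hBe⟩

theorem Tr_compl (h : Chain ℬ) {k : ℕ} {C : Set α} (hsub : C ⊆ R) (hC : Tr ℬ R k C) :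
    Tr ℬ R k (R \ C) := by
  obtain ⟨B, hB, hBe⟩ := hC
  refine ⟨Bᶜ, h.compl hB, ?_⟩
  rw [hBe]
  ext x
  simp only [mem_diff, mem_inter_iff, mem_compl_iff]
  tauto

theorem Tr_union (h : Chain ℬ) {k l : ℕ} {C C' : Set α} (hC : Tr ℬ R k C)
    (hC' : Tr ℬ R l C') : Tr ℬ R (max k l) (C ∪ C') := by
  obtain ⟨B, hB, hBe⟩ := hC
  obtain ⟨B', hB', hBe'⟩ := hC'
  refine ⟨B ∪ B', h.union (h.mono (le_max_left _ _) hB) (h.mono (le_max_right _ _) hB'), ?_⟩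
  rw [hBe, hBe', union_inter_distrib_right]

theorem Tr_diff (h : Chain ℬ) {k l : ℕ} {C C' : Set α} (hC : Tr ℬ R k C)
    (hC' : Tr ℬ R l C') : Tr ℬ R (max k l) (C \ C') := by
  obtain ⟨B, hB, hBe⟩ := hC
  obtain ⟨B', hB', hBe'⟩ := hC'
  refine ⟨B \ B', h.diff (h.mono (le_max_left _ _) hB) (h.mono (le_max_right _ _) hB'), ?_⟩
  rw [hBe, hBe']
  ext x
  simp only [mem_diff, mem_inter_iff]
  tauto

theorem Tr_exists (h : Chain ℬ) {C : Set α} (hC : C ⊆ R) : ∃ k, Tr ℬ R k C := by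
  obtain ⟨k, hk⟩ := h.cover C
  exact ⟨k, C, hk, (inter_eq_left.mpr hC).symm⟩

theorem Tr_subset {k : ℕ} {C : Set α} (hC : Tr ℬ R k C) : C ⊆ R := by
  obtain ⟨B, _, hBe⟩ := hC; rw [hBe]; exact inter_subset_right

end Chain
end Kop

namespace Kop

variable {α : Type*}

/-- one step of the recursive construction. -/
def stepf (esc : ℕ → Set α) (aL tL : Set α → ℕ) (R : Set α) (k : ℕ)
    (p : ℕ × Set α × Set α × Set α) : ℕ × Set α × Set α × Set α :=
  let n' := (max (max p.1 (k+1)) (max (aL (R \ p.2.1)) (max (tL p.2.2.1) (tL p.2.2.2)))) + 1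
  let B' := p.2.1 ∩ esc n'
  let D := p.2.1 \ B'
  (n', B', if Even k then p.2.2.1 ∪ D else p.2.2.1,
    if Even k then p.2.2.2 else p.2.2.2 ∪ D)

/-- the recursive state: `(level, current conull set, even layers so far, odd layers+junk)`. -/
def stt (esc : ℕ → Set α) (aL tL : Set α → ℕ) (R : Set α) : ℕ → ℕ × Set α × Set α × Set α
  | 0 => (0, esc 0, ∅, R \ esc 0)
  | k+1 => stepf esc aL tL R k (stt esc aL tL R k)

theorem stt_succ (esc : ℕ → Set α) (aL tL : Set α → ℕ) (R : Set α) (k : ℕ) :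
    stt esc aL tL R (k+1) = stepf esc aL tL R k (stt esc aL tL R k) := rfl

end Kop

namespace Kop
namespace Chain

open Kop

variable {α : Type*} {ℬ : ℕ → Set (Set α)}

theorem conc_false (h : Chain ℬ) (hcon : ∀ N, ∃ S : Set α, S ∉ ℬ N)
    (R : Set α) (hRunb : ¬ bdd ℬ R)
    (hconc : ∀ X, X ⊆ R → ¬ bdd ℬ X → bdd ℬ (R \ X)) : False := by
  classical
  -- not both bounded
  have hone : ∀ X, X ⊆ R → bdd ℬ X → bdd ℬ (R \ X) → False := by
    intro X hX h1 h2
    exact hRunb (by simpa [union_diff_cancel hX] using h.bdd_union h1 h2)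
  -- unbounded intersection
  have hInt : ∀ X Y, X ⊆ R → Y ⊆ R → ¬bdd ℬ X → ¬bdd ℬ Y → ¬bdd ℬ (X ∩ Y) := by
    intro X Y hX hY hnX hnY hXY
    have h1 : bdd ℬ (R \ X) := hconc X hX hnX
    have h2 : bdd ℬ (R \ Y) := hconc Y hY hnY
    have h3 : bdd ℬ (R \ (X ∩ Y)) := by
      refine bdd_subset ?_ (h.bdd_union h1 h2)
      intro x hx
      rcases hx with ⟨hxR, hxn⟩
      by_cases hxX : x ∈ X
      · right; exact ⟨hxR, fun hxY => hxn ⟨hxX, hxY⟩⟩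
      · left; exact ⟨hxR, hxX⟩
    exact hone _ (inter_subset_left.trans hX) hXY h3
  -- escape sets
  have hesc : ∀ k, ∃ A, A ⊆ R ∧ ¬ bdd ℬ A ∧ ¬ Tr ℬ R k A := by
    intro k
    have hnf : ¬ full ℬ k R := fun hf => hRunb ⟨k, hf⟩
    rw [full] at hnf; push_neg at hnf
    obtain ⟨C, hCsub, hCesc⟩ := hnf
    have hCnt : ¬ Tr ℬ R k C := by rintro ⟨B, hB, hBe⟩; exact hCesc B hB hBe
    by_cases hCb : bdd ℬ C
    · refine ⟨R \ C, diff_subset, ?_, ?_⟩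
      · intro hb; exact hone C hCsub hCb hb
      · intro htr
        have := h.Tr_compl diff_subset htr
        rw [diff_diff_cancel_left hCsub] at this
        exact hCnt this
    · exact ⟨C, hCsub, hCb, hCnt⟩
  -- absorption
  have habs : ∀ Z, Z ⊆ R → bdd ℬ Z → ∃ E, ∀ C, C ⊆ Z → Tr ℬ R E C := by
    intro Z hZR hZb
    obtain ⟨ℓ, hℓ⟩ := hZb
    obtain ⟨m, BZ, hBZ, hZe⟩ := h.Tr_exists hZR
    refine ⟨max ℓ m, fun C hC => ?_⟩
    obtain ⟨B0, hB0, hB0e⟩ := hℓ C hC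
    refine ⟨B0 ∩ BZ, h.inter (h.mono (le_max_left _ _) hB0) (h.mono (le_max_right _ _) hBZ), ?_⟩
    rw [hB0e, hZe, inter_assoc]
  -- choice functions
  choose esc hescSub hescUnb hescNT using hesc
  obtain ⟨tL, htL⟩ : ∃ tL : Set α → ℕ, ∀ C, C ⊆ R → Tr ℬ R (tL C) C := by
    refine ⟨fun C => if hC : C ⊆ R then (h.Tr_exists hC).choose else 0, fun C hC => ?_⟩
    simp only [dif_pos hC]
    exact (h.Tr_exists hC).choose_spec
  obtain ⟨aL, haL⟩ : ∃ aL : Set α → ℕ, ∀ Z, Z ⊆ R → bdd ℬ Z → ∀ C, C ⊆ Z →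
      Tr ℬ R (aL Z) C := by
    refine ⟨fun Z => if hZ : Z ⊆ R ∧ bdd ℬ Z then (habs Z hZ.1 hZ.2).choose else 0,
      fun Z h1 h2 C hC => ?_⟩
    simp only [dif_pos (show Z ⊆ R ∧ bdd ℬ Z from ⟨h1, h2⟩)]
    exact (habs Z h1 h2).choose_spec C hC
  -- the recursion
  set nk : ℕ → ℕ := fun k => (stt esc aL tL R k).1 with hnk
  set Bk : ℕ → Set α := fun k => (stt esc aL tL R k).2.1 with hBk
  set Ek : ℕ → Set α := fun k => (stt esc aL tL R k).2.2.1 with hEk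
  set Ok : ℕ → Set α := fun k => (stt esc aL tL R k).2.2.2 with hOk
  set Dk : ℕ → Set α := fun k => Bk k \ Bk (k+1) with hDk
  have hn_succ : ∀ k, nk (k+1) =
      (max (max (nk k) (k+1)) (max (aL (R \ Bk k)) (max (tL (Ek k)) (tL (Ok k))))) + 1 :=
    fun k => rfl
  have hB_succ : ∀ k, Bk (k+1) = Bk k ∩ esc (nk (k+1)) := fun k => rfl
  have hE_succ : ∀ k, Ek (k+1) = if Even k then Ek k ∪ Dk k else Ek k := fun k => rfl
  have hO_succ : ∀ k, Ok (k+1) = if Even k then Ok k else Ok k ∪ Dk k := fun k => rfl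
  have hB0 : Bk 0 = esc 0 := rfl
  have hn0 : nk 0 = 0 := rfl
  have hE0 : Ek 0 = ∅ := rfl
  have hO0 : Ok 0 = R \ Bk 0 := rfl
  -- numeric bounds
  have hbounds : ∀ k, aL (R \ Bk k) < nk (k+1) ∧ tL (Ek k) < nk (k+1) ∧
      tL (Ok k) < nk (k+1) ∧ nk k < nk (k+1) ∧ k + 1 ≤ nk (k+1) := by
    intro k
    rw [hn_succ k]
    refine ⟨?_, ?_, ?_, ?_, ?_⟩
    · exact Nat.lt_succ_of_le (le_trans (le_max_left _ _) (le_max_right _ _))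
    · exact Nat.lt_succ_of_le (le_trans (le_trans (le_max_left _ _) (le_max_right _ _))
        (le_max_right _ _))
    · exact Nat.lt_succ_of_le (le_trans (le_trans (le_max_right _ _) (le_max_right _ _))
        (le_max_right _ _))
    · exact Nat.lt_succ_of_le (le_trans (le_max_left _ _) (le_max_left _ _))
    · exact Nat.le_succ_of_le (le_trans (le_max_right _ _) (le_max_left _ _))
  have hn_ge : ∀ k, k ≤ nk k := by
    intro k
    cases k with
    | zero => exact Nat.zero_le _
    | succ k => exact (hbounds k).2.2.2.2
  -- basic invariants
  have hBsubR : ∀ k, Bk k ⊆ R := by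
    intro k
    induction k with
    | zero => rw [hB0]; exact hescSub 0
    | succ k ih => rw [hB_succ]; exact inter_subset_left.trans ih
  have hBunb : ∀ k, ¬ bdd ℬ (Bk k) := by
    intro k
    induction k with
    | zero => rw [hB0]; exact hescUnb 0
    | succ k ih =>
      rw [hB_succ]
      exact hInt _ _ (hBsubR k) (hescSub _) ih (hescUnb _)
  have hBanti : ∀ {i j : ℕ}, i ≤ j → Bk j ⊆ Bk i := by
    have hstep : ∀ k, Bk (k+1) ⊆ Bk k := fun k => by rw [hB_succ]; exact inter_subset_left
    intro i j hij
    induction j with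
    | zero => rw [Nat.le_zero.mp hij]
    | succ j ih =>
      rcases Nat.eq_or_lt_of_le hij with rfl | hlt
      · exact subset_rfl
      · exact (hstep j).trans (ih (Nat.lt_succ_iff.mp hlt))
  -- the current set always escapes its level
  have hBnt : ∀ k, ¬ Tr ℬ R (nk k) (Bk k) := by
    intro k
    cases k with
    | zero => rw [hB0, hn0]; exact hescNT 0
    | succ k =>
      intro htr
      apply hescNT (nk (k+1))
      have hsplit : esc (nk (k+1)) = Bk (k+1) ∪ (esc (nk (k+1)) \ Bk k) := by
        rw [hB_succ]
        ext x
        constructor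
        · intro hx
          by_cases hxB : x ∈ Bk k
          · exact Or.inl ⟨hxB, hx⟩
          · exact Or.inr ⟨hx, hxB⟩
        · rintro (hx | hx)
          · exact hx.2
          · exact hx.1
      rw [hsplit]
      have h2 : Tr ℬ R (aL (R \ Bk k)) (esc (nk (k+1)) \ Bk k) := by
        refine haL (R \ Bk k) diff_subset (hconc _ (hBsubR k) (hBunb k)) _ ?_
        intro x hx
        exact ⟨hescSub _ hx.1, hx.2⟩
      refine h.Tr_mono ?_ (h.Tr_union htr h2)
      exact max_le le_rfl (le_of_lt (hbounds k).1)
  -- layer facts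
  have hD_subB : ∀ j, Dk j ⊆ Bk j := fun j => diff_subset
  have hD_in : ∀ {j m : ℕ}, m ≤ j → Dk j ⊆ Bk m := fun {j m} hmj => (hD_subB j).trans (hBanti hmj)
  have hD_out : ∀ {j m : ℕ}, j < m → ∀ x ∈ Dk j, x ∉ Bk m :=
    fun {j m} hjm x hx hxm => hx.2 (hBanti (Nat.succ_le_of_lt hjm) hxm)
  have hD_subR : ∀ j, Dk j ⊆ R := fun j => (hD_subB j).trans (hBsubR j)
  -- the intersection
  set Bom : Set α := ⋂ k, Bk k with hBom
  have hBomsub : ∀ m, Bom ⊆ Bk m := fun m => iInter_subset _ m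
  have hBomR : Bom ⊆ R := (hBomsub 0).trans (hBsubR 0)
  -- characterisations of Ek and Ok
  have hE_char : ∀ m x, x ∈ Ek m ↔ ∃ j, j < m ∧ Even j ∧ x ∈ Dk j := by
    intro m
    induction m with
    | zero => intro x; rw [hE0]; simp
    | succ m ih =>
      intro x
      rw [hE_succ]
      by_cases hm : Even m
      · rw [if_pos hm]
        simp only [mem_union, ih]
        constructor
        · rintro (⟨j, hj, he, hx⟩ | hx)
          · exact ⟨j, Nat.lt_succ_of_lt hj, he, hx⟩
          · exact ⟨m, Nat.lt_succ_self m, hm, hx⟩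
        · rintro ⟨j, hj, he, hx⟩
          rcases Nat.lt_succ_iff_lt_or_eq.mp hj with hj' | rfl
          · exact Or.inl ⟨j, hj', he, hx⟩
          · exact Or.inr hx
      · rw [if_neg hm]
        rw [ih]
        constructor
        · rintro ⟨j, hj, he, hx⟩
          exact ⟨j, Nat.lt_succ_of_lt hj, he, hx⟩
        · rintro ⟨j, hj, he, hx⟩
          rcases Nat.lt_succ_iff_lt_or_eq.mp hj with hj' | rfl
          · exact ⟨j, hj', he, hx⟩
          · exact absurd he hm
  have hO_char : ∀ m x, x ∈ Ok m ↔ (x ∈ R \ Bk 0 ∨ ∃ j, j < m ∧ ¬ Even j ∧ x ∈ Dk j) := by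
    intro m
    induction m with
    | zero => intro x; rw [hO0]; simp
    | succ m ih =>
      intro x
      rw [hO_succ]
      by_cases hm : Even m
      · rw [if_pos hm]
        rw [ih]
        constructor
        · rintro (hx | ⟨j, hj, he, hx⟩)
          · exact Or.inl hx
          · exact Or.inr ⟨j, Nat.lt_succ_of_lt hj, he, hx⟩
        · rintro (hx | ⟨j, hj, he, hx⟩)
          · exact Or.inl hx
          · rcases Nat.lt_succ_iff_lt_or_eq.mp hj with hj' | rfl
            · exact Or.inr ⟨j, hj', he, hx⟩
            · exact absurd hm he
      · rw [if_neg hm]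
        simp only [mem_union, ih]
        constructor
        · rintro ((hx | ⟨j, hj, he, hx⟩) | hx)
          · exact Or.inl hx
          · exact Or.inr ⟨j, Nat.lt_succ_of_lt hj, he, hx⟩
          · exact Or.inr ⟨m, Nat.lt_succ_self m, hm, hx⟩
        · rintro (hx | ⟨j, hj, he, hx⟩)
          · exact Or.inl (Or.inl hx)
          · rcases Nat.lt_succ_iff_lt_or_eq.mp hj with hj' | rfl
            · exact Or.inl (Or.inr ⟨j, hj', he, hx⟩)
            · exact Or.inr hx
  have hEkR : ∀ m, Ek m ⊆ R := by
    intro m x hx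
    obtain ⟨j, _, _, hxj⟩ := (hE_char m x).mp hx
    exact hD_subR j hxj
  have hOkR : ∀ m, Ok m ⊆ R := by
    intro m x hx
    rcases (hO_char m x).mp hx with hx | ⟨j, _, _, hxj⟩
    · exact hx.1
    · exact hD_subR j hxj
  -- membership in Bk m from avoiding all earlier layers
  have hstayB : ∀ (x : α) (m : ℕ), x ∈ Bk 0 → (∀ j, j < m → x ∉ Dk j) → x ∈ Bk m := by
    intro x m hx0 hnoD
    induction m with
    | zero => exact hx0
    | succ m ih =>
      have hxm : x ∈ Bk m := ih (fun j hj => hnoD j (Nat.lt_succ_of_lt hj))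
      by_contra hxs
      exact hnoD m (Nat.lt_succ_self m) ⟨hxm, hxs⟩
  -- main case analysis
  by_cases hBomb : bdd ℬ Bom
  case neg =>
    -- Bom unbounded
    have hRB : bdd ℬ (R \ Bom) := hconc _ hBomR hBomb
    set m := max (tL Bom) (aL (R \ Bom)) + 1 with hm
    apply hBnt m
    have hsp : Bk m = Bom ∪ (Bk m \ Bom) :=
      (union_diff_cancel (hBomsub m)).symm
    rw [hsp]
    have h1 : Tr ℬ R (tL Bom) Bom := htL _ hBomR
    have h2 : Tr ℬ R (aL (R \ Bom)) (Bk m \ Bom) := by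
      refine haL _ diff_subset hRB _ ?_
      intro x hx
      exact ⟨hBsubR m hx.1, hx.2⟩
    refine h.Tr_mono ?_ (h.Tr_union h1 h2)
    calc max (tL Bom) (aL (R \ Bom)) ≤ m - 1 := by omega
    _ ≤ m := by omega
    _ ≤ nk m := hn_ge m
  case pos =>
    set Sev : Set α := ⋃ j, ⋃ (_ : Even j), Dk j with hSev
    have hSevR : Sev ⊆ R := by
      intro x hx
      simp only [hSev, mem_iUnion] at hx
      obtain ⟨j, _, hxj⟩ := hx
      exact hD_subR j hxj
    have hSevmem : ∀ x, x ∈ Sev ↔ ∃ j, Even j ∧ x ∈ Dk j := by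
      intro x
      simp only [hSev, mem_iUnion, exists_prop]
    by_cases hSevb : bdd ℬ Sev
    case pos =>
      -- odd case : R \ Sev is unbounded
      have hSoddunb : ¬ bdd ℬ (R \ Sev) := fun hb => hone Sev hSevR hSevb hb
      set m := 2 * (tL (R \ Sev) + aL Sev) + 3 with hm
      have hmodd : ¬ Even (m - 1 + 1) := by
        have : m - 1 + 1 = m := by omega
        rw [this]
        simp only [hm, Nat.even_iff]
        omega
      have hm1even : Even (m - 1) := by
        simp only [hm, Nat.even_iff]
        omega
      apply hBnt m
      -- the key identity
      have hid1 : (R \ Sev) ∩ Bk m = (R \ Sev) \ Ok m := by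
        ext x
        constructor
        · rintro ⟨hxS, hxB⟩
          refine ⟨hxS, fun hxO => ?_⟩
          rcases (hO_char m x).mp hxO with hx | ⟨j, hj, _, hxj⟩
          · exact hx.2 (hBanti (Nat.zero_le m) hxB)
          · exact hD_out hj x hxj hxB
        · rintro ⟨hxS, hxO⟩
          refine ⟨hxS, ?_⟩
          have hx0 : x ∈ Bk 0 := by
            by_contra hx0
            exact hxO ((hO_char m x).mpr (Or.inl ⟨hxS.1, hx0⟩))
          refine hstayB x m hx0 ?_
          intro j hj hxj
          by_cases hje : Even j
          · exact hxS.2 ((hSevmem x).mpr ⟨j, hje, hxj⟩)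
          · exact hxO ((hO_char m x).mpr (Or.inr ⟨j, hj, hje, hxj⟩))
      have hid2 : Bk m = ((R \ Sev) ∩ Bk m) ∪ (Bk m ∩ Sev) := by
        ext x
        constructor
        · intro hx
          by_cases hxS : x ∈ Sev
          · exact Or.inr ⟨hx, hxS⟩
          · exact Or.inl ⟨⟨hBsubR m hx, hxS⟩, hx⟩
        · rintro (hx | hx)
          · exact hx.2
          · exact hx.1
      rw [hid2, hid1]
      have hT1 : Tr ℬ R (max (tL (R \ Sev)) (tL (Ok m))) ((R \ Sev) \ Ok m) :=
        h.Tr_diff (htL _ diff_subset) (htL _ (hOkR m))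
      have hT2 : Tr ℬ R (aL Sev) (Bk m ∩ Sev) :=
        haL Sev hSevR hSevb _ inter_subset_right
      refine h.Tr_mono ?_ (h.Tr_union hT1 hT2)
      have hOm : Ok m = Ok (m - 1) := by
        have hme : m - 1 + 1 = m := by omega
        conv_lhs => rw [← hme]
        rw [hO_succ, if_pos hm1even]
      have hb1 : tL (Ok m) < nk m := by
        rw [hOm]
        have := (hbounds (m - 1)).2.2.1
        have hme : m - 1 + 1 = m := by omega
        rwa [hme] at this
      have hb2 : tL (R \ Sev) < nk m := by
        have h1 : tL (R \ Sev) < m := by omega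
        exact lt_of_lt_of_le h1 (hn_ge m)
      have hb3 : aL Sev < nk m := by
        have h1 : aL Sev < m := by omega
        exact lt_of_lt_of_le h1 (hn_ge m)
      exact max_le (max_le (le_of_lt hb2) (le_of_lt hb1)) (le_of_lt hb3)
    case neg =>
      -- even case : Sev unbounded
      have hRS : bdd ℬ (R \ Sev) := hconc Sev hSevR hSevb
      set m := 2 * (tL Sev + aL (R \ Sev)) + 2 with hm
      have hm1odd : ¬ Even (m - 1) := by
        simp only [hm, Nat.even_iff]
        omega
      apply hBnt m
      have hid1 : Sev ∩ Bk m = Sev \ Ek m := by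
        ext x
        constructor
        · rintro ⟨hxS, hxB⟩
          refine ⟨hxS, fun hxE => ?_⟩
          obtain ⟨j, hj, _, hxj⟩ := (hE_char m x).mp hxE
          exact hD_out hj x hxj hxB
        · rintro ⟨hxS, hxE⟩
          refine ⟨hxS, ?_⟩
          obtain ⟨j, hje, hxj⟩ := (hSevmem x).mp hxS
          have hjm : m ≤ j := by
            by_contra hjm
            exact hxE ((hE_char m x).mpr ⟨j, by omega, hje, hxj⟩)
          exact hD_in hjm hxj
      have hid2 : Bk m = (Sev ∩ Bk m) ∪ (Bk m \ Sev) := by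
        ext x
        constructor
        · intro hx
          by_cases hxS : x ∈ Sev
          · exact Or.inl ⟨hxS, hx⟩
          · exact Or.inr ⟨hx, hxS⟩
        · rintro (hx | hx)
          · exact hx.2
          · exact hx.1
      rw [hid2, hid1]
      have hT1 : Tr ℬ R (max (tL Sev) (tL (Ek m))) (Sev \ Ek m) :=
        h.Tr_diff (htL _ hSevR) (htL _ (hEkR m))
      have hT2 : Tr ℬ R (aL (R \ Sev)) (Bk m \ Sev) := by
        refine haL _ diff_subset hRS _ ?_
        intro x hx
        exact ⟨hBsubR m hx.1, hx.2⟩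
      refine h.Tr_mono ?_ (h.Tr_union hT1 hT2)
      have hEm : Ek m = Ek (m - 1) := by
        have hme : m - 1 + 1 = m := by omega
        conv_lhs => rw [← hme]
        rw [hE_succ, if_neg hm1odd]
      have hb1 : tL (Ek m) < nk m := by
        rw [hEm]
        have := (hbounds (m - 1)).2.1
        have hme : m - 1 + 1 = m := by omega
        rwa [hme] at this
      have hb2 : tL Sev < nk m := by
        have h1 : tL Sev < m := by omega
        exact lt_of_lt_of_le h1 (hn_ge m)
      have hb3 : aL (R \ Sev) < nk m := by
        have h1 : aL (R \ Sev) < m := by omega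
        exact lt_of_lt_of_le h1 (hn_ge m)
      exact max_le (max_le (le_of_lt hb2) (le_of_lt hb1)) (le_of_lt hb3)

end Chain
end Kop

namespace Kop
namespace Chain

variable {α : Type*} {ℬ : ℕ → Set (Set α)}

theorem lemP (h : Chain ℬ) (Q : ℕ → Set α)
    (hdis : ∀ i j, i < j → ∀ x ∈ Q i, x ∉ Q j)
    (hunb : ∀ i, ¬ bdd ℬ (Q i)) : False := by
  have hch : ∀ i, ∃ C, C ⊆ Q i ∧ ∀ B ∈ ℬ i, C ≠ B ∩ Q i := by
    intro i
    have hnf : ¬ full ℬ i (Q i) := fun hf => hunb i ⟨i, hf⟩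
    rw [full] at hnf
    push_neg at hnf
    exact hnf
  choose C hCsub hCesc using hch
  obtain ⟨N, hN⟩ := h.cover (⋃ i, C i)
  refine hCesc N (⋃ i, C i) hN ?_
  apply Subset.antisymm
  · exact subset_inter (subset_iUnion C N) (hCsub N)
  · rintro x ⟨hx1, hx2⟩
    obtain ⟨i, hxi⟩ := mem_iUnion.mp hx1
    rcases lt_trichotomy i N with hlt | rfl | hgt
    · exact absurd hx2 (hdis i N hlt x (hCsub i hxi))
    · exact hxi
    · exact absurd (hCsub i hxi) (hdis N i hgt x hx2)

theorem eventually_full (h : Chain ℬ) : ∃ N, ∀ S : Set α, S ∈ ℬ N := by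
  classical
  by_contra hcon
  push_neg at hcon
  have hunb_univ : ¬ bdd ℬ (univ : Set α) := by
    rintro ⟨K, hK⟩
    obtain ⟨S, hS⟩ := hcon K
    obtain ⟨B, hB, hBe⟩ := hK S (subset_univ S)
    rw [inter_univ] at hBe
    exact hS (hBe ▸ hB)
  by_cases hsplit : ∀ Rs : Set α, ¬ bdd ℬ Rs → ∃ X, X ⊆ Rs ∧ ¬ bdd ℬ X ∧ ¬ bdd ℬ (Rs \ X)
  · choose F h1 h2 h3 using hsplit
    set step : {Rs : Set α // ¬ bdd ℬ Rs} → {Rs : Set α // ¬ bdd ℬ Rs} :=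
      fun p => ⟨p.1 \ F p.1 p.2, h3 p.1 p.2⟩ with hstep
    set seq : ℕ → {Rs : Set α // ¬ bdd ℬ Rs} := fun n => step^[n] ⟨univ, hunb_univ⟩ with hseq
    set Q : ℕ → Set α := fun n => F (seq n).1 (seq n).2 with hQ
    have hsucc : ∀ n, (seq (n+1)).1 = (seq n).1 \ Q n := by
      intro n
      have : seq (n+1) = step (seq n) := Function.iterate_succ_apply' step n _
      rw [this]
    have hanti : ∀ i j, i ≤ j → (seq j).1 ⊆ (seq i).1 := by
      intro i j hij
      induction j with
      | zero => rw [Nat.le_zero.mp hij]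
      | succ j ih =>
        rcases Nat.eq_or_lt_of_le hij with rfl | hlt
        · exact subset_rfl
        · refine subset_trans ?_ (ih (Nat.lt_succ_iff.mp hlt))
          rw [hsucc j]
          exact diff_subset
    refine lemP h Q ?_ (fun n => h2 _ _)
    intro i j hij x hxi hxj
    have hx1 : x ∈ (seq j).1 := h1 _ _ hxj
    have hx2 : x ∈ (seq (i+1)).1 := hanti _ _ (Nat.succ_le_of_lt hij) hx1
    rw [hsucc i] at hx2
    exact hx2.2 hxi
  · push_neg at hsplit
    obtain ⟨R, hRunb, hconc'⟩ := hsplit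
    exact h.conc_false hcon R hRunb hconc'

end Chain
end Kop

open Filter Set Metric

set_option maxHeartbeats 2000000 in
/-- Lemma 6.5 (approximate interpolation): let `G` be a metrizable locally compact group,
`𝒜 ⊆ LUC(G)` a C*-subalgebra and `T` an `𝒜`-interpolation set. Then for every `ε > 0` there is a
neighbourhood `V` of the identity such that every unimodular function `f` on `T` admits `φ ∈ 𝒜`
with `|φ(ut) − f(t)| < ε` for all `t ∈ T` and `u ∈ V`. -/
theorem approximate_interpolation
    {G : Type*} [TopologicalSpace G] [Group G] [IsTopologicalGroup G]
    [LocallyCompactSpace G] [TopologicalSpace.MetrizableSpace G] [T2Space G]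
    (A : Set (G → ℂ))
    -- `𝒜` consists of bounded continuous functions which are right uniformly continuous:
    (hCB : ∀ f ∈ A, Continuous f ∧ ∃ M : ℝ, ∀ s : G, ‖f s‖ ≤ M)
    (hLUC : ∀ f ∈ A, ∀ ε > (0 : ℝ), ∃ U ∈ nhds (1 : G),
      ∀ s t : G, s * t⁻¹ ∈ U → ‖f s - f t‖ < ε)
    -- `𝒜` is a C*-subalgebra (closed under the algebra operations and uniform limits):
    (hadd : ∀ f ∈ A, ∀ g ∈ A, f + g ∈ A) (hmul : ∀ f ∈ A, ∀ g ∈ A, f * g ∈ A)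
    (hsmul : ∀ c : ℂ, ∀ f ∈ A, c • f ∈ A)
    (hstar : ∀ f ∈ A, (fun t => (starRingEnd ℂ) (f t)) ∈ A)
    (hclosed : ∀ (u : ℕ → G → ℂ) (f : G → ℂ), (∀ n, u n ∈ A) →
      TendstoUniformly u f Filter.atTop → Continuous f → f ∈ A)
    -- `T` is an `𝒜`-interpolation set:
    (T : Set G)
    (hinterp : ∀ g : G → ℂ, (∃ M : ℝ, ∀ t ∈ T, ‖g t‖ ≤ M) → ∃ f ∈ A, ∀ t ∈ T, f t = g t) :
    ∀ ε > (0 : ℝ), ∃ V ∈ nhds (1 : G), ∀ f : G → ℂ, (∀ t ∈ T, ‖f t‖ = 1) →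
      ∃ φ ∈ A, ∀ t ∈ T, ∀ u ∈ V, ‖φ (u * t) - f t‖ < ε := by
  classical
  intro ε hε
  -- ############ basic algebra facts ############
  obtain ⟨f₀, hf₀A, -⟩ := hinterp (fun _ => 0) ⟨0, by simp⟩
  have hzero : (fun _ : G => (0 : ℂ)) ∈ A := by
    have h1 := hsmul 0 f₀ hf₀A
    have h2 : (0 : ℂ) • f₀ = (fun _ : G => (0 : ℂ)) := by
      funext x; simp
    rwa [h2] at h1
  have hsub : ∀ f ∈ A, ∀ g ∈ A, f - g ∈ A := by
    intro f hf g hg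
    have h1 := hadd f hf _ (hsmul (-1) g hg)
    have h2 : f + (-1 : ℂ) • g = f - g := by
      funext x; simp [sub_eq_add_neg]
    rwa [h2] at h1
  have hre : ∀ f ∈ A, (fun s => (((f s).re : ℝ) : ℂ)) ∈ A := by
    intro f hf
    have h1 := hsmul (1/2 : ℂ) _ (hadd f hf _ (hstar f hf))
    have h2 : (1/2 : ℂ) • (f + fun t => (starRingEnd ℂ) (f t)) =
        (fun s => (((f s).re : ℝ) : ℂ)) := by
      funext s
      simp only [Pi.smul_apply, Pi.add_apply, smul_eq_mul]
      rw [Complex.add_conj]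
      push_cast
      ring
    rwa [h2] at h1
  have hpow : ∀ χ ∈ A, ∀ n : ℕ, (fun s => χ s ^ (n+1)) ∈ A := by
    intro χ hχ n
    induction n with
    | zero => simpa using hχ
    | succ n ih =>
      have h1 := hmul _ ih χ hχ
      have h2 : ((fun s => χ s ^ (n+1)) * χ) = fun s => χ s ^ (n+2) := by
        funext s
        simp [pow_succ]
      rwa [h2] at h1
  -- coercion fact for real-valued members
  have hcoe : ∀ (χ : G → ℂ), (∀ s, (χ s).im = 0) → ∀ s, (((χ s).re : ℝ) : ℂ) = χ s := by
    intro χ him s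
    exact Complex.ext rfl (by simp [him s])
  -- norm of a real-valued member minus a real constant
  have hnormre : ∀ (z : ℂ) (r : ℝ), z.im = 0 → ‖z - (r : ℂ)‖ = |z.re - r| := by
    intro z r hz
    have h1 : z - (r : ℂ) = ((z.re - r : ℝ) : ℂ) := by
      apply Complex.ext <;> simp [hz]
    rw [h1, Complex.norm_real, Real.norm_eq_abs]
  -- constant-free polynomial evaluation
  have hpoly : ∀ χ ∈ A, (∀ s, (χ s).im = 0) → ∀ p : Polynomial ℝ,
      (fun s => (((p.eval ((χ s).re) - p.eval 0 : ℝ)) : ℂ)) ∈ A := by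
    intro χ hχ him p
    induction p using Polynomial.induction_on' with
    | add p q hp hq =>
      have h1 := hadd _ hp _ hq
      have h2 : ((fun s => (((p.eval ((χ s).re) - p.eval 0 : ℝ)) : ℂ)) +
          (fun s => (((q.eval ((χ s).re) - q.eval 0 : ℝ)) : ℂ))) =
          (fun s => ((((p+q).eval ((χ s).re) - (p+q).eval 0 : ℝ)) : ℂ)) := by
        funext s
        simp only [Pi.add_apply, Polynomial.eval_add]
        push_cast
        ring
      rwa [h2] at h1
    | monomial n a =>
      cases n with
      | zero =>
        have h2 : (fun _ : G => (0:ℂ)) =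
            (fun s => ((((Polynomial.monomial 0 a).eval ((χ s).re)
              - (Polynomial.monomial 0 a).eval 0 : ℝ)) : ℂ)) := by
          funext s
          simp [Polynomial.eval_monomial]
        rw [← h2]
        exact hzero
      | succ k =>
        have h1 := hsmul (a : ℂ) _ (hpow χ hχ k)
        have h2 : (a : ℂ) • (fun s => χ s ^ (k+1)) =
            (fun s => ((((Polynomial.monomial (k+1) a).eval ((χ s).re)
              - (Polynomial.monomial (k+1) a).eval 0 : ℝ)) : ℂ)) := by
          funext s
          simp only [Pi.smul_apply, smul_eq_mul, Polynomial.eval_monomial]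
          rw [zero_pow (Nat.succ_ne_zero k), mul_zero, sub_zero]
          push_cast
          rw [hcoe χ him s]
        rwa [h2] at h1
  -- continuous functional calculus for real-valued members
  have hcalc : ∀ χ ∈ A, (∀ s, (χ s).im = 0) → ∀ R : ℝ, (∀ s, |(χ s).re| ≤ R) →
      ∀ h : ℝ → ℝ, Continuous h → h 0 = 0 →
      (fun s => ((h ((χ s).re) : ℝ) : ℂ)) ∈ A := by
    intro χ hχ him R hR h hcont h0
    have hRnn : (0 : ℝ) ≤ R := le_trans (abs_nonneg _) (hR 1)
    have hap : ∀ n : ℕ, ∃ p : Polynomial ℝ, ∀ x ∈ Set.Icc (-R) R,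
        |p.eval x - h x| < 1/(n+1) := by
      intro n
      exact exists_polynomial_near_of_continuousOn (-R) R h hcont.continuousOn _
        (by positivity)
    choose ps hps using hap
    have humem : ∀ n, (fun s => ((((ps n).eval ((χ s).re) - (ps n).eval 0 : ℝ)) : ℂ)) ∈ A :=
      fun n => hpoly χ hχ him (ps n)
    have hconv : TendstoUniformly
        (fun n => (fun s => ((((ps n).eval ((χ s).re) - (ps n).eval 0 : ℝ)) : ℂ)))
        (fun s => ((h ((χ s).re) : ℝ) : ℂ)) atTop := by
      rw [Metric.tendstoUniformly_iff]
      intro δ hδ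
      obtain ⟨N, hN⟩ := exists_nat_gt (2 / δ)
      refine Filter.eventually_atTop.mpr ⟨N, fun n hn s => ?_⟩
      have hx : (χ s).re ∈ Set.Icc (-R) R := by
        rcases abs_le.mp (hR s) with ⟨h1, h2⟩
        exact ⟨h1, h2⟩
      have h1 : |(ps n).eval ((χ s).re) - h ((χ s).re)| < 1/(n+1) := hps n _ hx
      have h0' : |(ps n).eval 0| < 1/(n+1) := by
        have := hps n 0 ⟨neg_nonpos.mpr hRnn, hRnn⟩
        rwa [h0, sub_zero] at this
      rw [Complex.dist_eq]
      have heq : ((h ((χ s).re) : ℝ) : ℂ) - (((ps n).eval ((χ s).re) - (ps n).eval 0 : ℝ) : ℂ)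
          = (((h ((χ s).re) - ((ps n).eval ((χ s).re) - (ps n).eval 0) : ℝ)) : ℂ) := by
        push_cast; ring
      rw [heq]
      rw [Complex.norm_real, Real.norm_eq_abs]
      have hb : |h ((χ s).re) - ((ps n).eval ((χ s).re) - (ps n).eval 0)| ≤
          |(ps n).eval ((χ s).re) - h ((χ s).re)| + |(ps n).eval 0| := by
        have : h ((χ s).re) - ((ps n).eval ((χ s).re) - (ps n).eval 0) =
            -((ps n).eval ((χ s).re) - h ((χ s).re)) + (ps n).eval 0 := by ring
        rw [this]
        exact le_trans (abs_add_le _ _) (by rw [abs_neg])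
      have hnb : 1/((n:ℝ)+1) ≤ 1/((N:ℝ)+1) := by
        apply one_div_le_one_div_of_le
        · positivity
        · exact_mod_cast Nat.succ_le_succ hn
      have hNb : 2/((N:ℝ)+1) < δ := by
        rw [div_lt_iff₀ (by positivity)]
        rw [div_lt_iff₀ hδ] at hN
        nlinarith [hN]
      calc |h ((χ s).re) - ((ps n).eval ((χ s).re) - (ps n).eval 0)|
          ≤ |(ps n).eval ((χ s).re) - h ((χ s).re)| + |(ps n).eval 0| := hb
        _ < 1/(n+1) + 1/(n+1) := by push_cast; linarith
        _ ≤ 1/((N:ℝ)+1) + 1/((N:ℝ)+1) := by push_cast at hnb ⊢; linarith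
        _ = 2/((N:ℝ)+1) := by ring
        _ < δ := hNb
    have hlimcont : Continuous fun s => ((h ((χ s).re) : ℝ) : ℂ) :=
      Complex.continuous_ofReal.comp (hcont.comp (Complex.continuous_re.comp (hCB χ hχ).1))
    exact hclosed _ _ humem hconv hlimcont
    -- ############ clamp and smoothstep ############
  set cl : ℝ → ℝ := fun x => max 0 (min 1 x) with hcldef
  have hclcont : Continuous cl := continuous_const.max (continuous_const.min continuous_id)
  have hcl0 : cl 0 = 0 := by simp [hcldef]
  have hclrange : ∀ x, 0 ≤ cl x ∧ cl x ≤ 1 := by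
    intro x
    exact ⟨le_max_left _ _, max_le zero_le_one (min_le_left _ _)⟩
  have hclproj : ∀ x b : ℝ, 0 ≤ b → b ≤ 1 → |cl x - b| ≤ |x - b| := by
    intro x b hb0 hb1
    rcases le_total x 0 with hx | hx
    · have h1 : cl x = 0 := by
        rw [hcldef]
        simp only
        rw [max_eq_left (le_trans (min_le_right _ _) hx)]
      rw [h1, zero_sub, abs_neg, abs_of_nonneg hb0]
      have h2 : |x - b| = -(x - b) := abs_of_nonpos (by linarith)
      linarith [h2]
    · rcases le_total 1 x with hx1 | hx1
      · have h1 : cl x = 1 := by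
          rw [hcldef]
          simp only
          rw [min_eq_left hx1, max_eq_right zero_le_one]
        rw [h1, abs_of_nonneg (by linarith : (0:ℝ) ≤ 1 - b),
          abs_of_nonneg (by linarith : (0:ℝ) ≤ x - b)]
        linarith
      · have h1 : cl x = x := by
          rw [hcldef]
          simp only
          rw [min_eq_right hx1, max_eq_right hx]
        rw [h1]
  have habs2 : ∀ a b : ℝ, |a - b| ≤ |a| + |b| := by
    intro a b
    rw [sub_eq_add_neg]
    exact le_trans (abs_add_le _ _) (by rw [abs_neg])
  have hPrange : ∀ x : ℝ, 0 ≤ x → x ≤ 1 → 0 ≤ 3*x^2 - 2*x^3 ∧ 3*x^2 - 2*x^3 ≤ 1 := by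
    intro x h0 h1
    have hkey := mul_nonneg (sq_nonneg (1 - x)) (by linarith : (0:ℝ) ≤ 1 + 2*x)
    constructor <;> nlinarith [hkey, sq_nonneg x, mul_nonneg (sq_nonneg x) h0]
  have hPcontr : ∀ x b : ℝ, 0 ≤ x → x ≤ 1 → (b = 0 ∨ b = 1) →
      |(3*x^2 - 2*x^3) - b| ≤ 3*(x-b)^2 := by
    intro x b h0 h1 hb
    have hkey := mul_nonneg (sq_nonneg (1 - x)) (by linarith : (0:ℝ) ≤ 1 + 2*x)
    rw [abs_le]
    rcases hb with rfl | rfl <;> constructor <;>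
      nlinarith [hkey, sq_nonneg x, sq_nonneg (1-x), mul_nonneg (sq_nonneg x) h0,
        mul_nonneg (mul_nonneg h0 h0) h0]
  have hPmem : ∀ χ, χ ∈ A → (∀ s, (χ s).im = 0) →
      (fun s => ((3*((χ s).re)^2 - 2*((χ s).re)^3 : ℝ) : ℂ)) ∈ A := by
    intro χ hχ him
    have h1 := hsub _ (hsmul 3 _ (hpow χ hχ 1)) _ (hsmul 2 _ (hpow χ hχ 2))
    have h2 : ((3:ℂ) • (fun s => χ s ^ (1+1)) - (2:ℂ) • (fun s => χ s ^ (2+1))) =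
        (fun s => ((3*((χ s).re)^2 - 2*((χ s).re)^3 : ℝ) : ℂ)) := by
      funext s
      simp only [Pi.sub_apply, Pi.smul_apply, smul_eq_mul]
      push_cast
      rw [hcoe χ him s]
      try ring
    rwa [h2] at h1
  -- ############ neighbourhood basis and the unit witness ############
  obtain ⟨Vb, hVb⟩ := (nhds (1:G)).exists_antitone_basis
  obtain ⟨e, heA, heT⟩ := hinterp (fun _ => 1) ⟨1, by simp⟩
  set e₁ : G → ℂ := fun s => (((e s).re : ℝ) : ℂ) with he₁def
  have he₁A : e₁ ∈ A := hre e heA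
  have he₁im : ∀ s, (e₁ s).im = 0 := fun s => by simp [he₁def]
  set eR : G → ℂ := fun s => ((cl ((e₁ s).re) : ℝ) : ℂ) with heRdef
  have heRA : eR ∈ A := by
    obtain ⟨-, M, hM⟩ := hCB e₁ he₁A
    exact hcalc e₁ he₁A he₁im M
      (fun s => le_trans (Complex.abs_re_le_norm _) (hM s))
      cl hclcont hcl0
  have heRim : ∀ s, (eR s).im = 0 := fun s => by simp [heRdef]
  have heRrange : ∀ s, 0 ≤ (eR s).re ∧ (eR s).re ≤ 1 := by
    intro s
    rw [heRdef]
    simp only [Complex.ofReal_re]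
    exact hclrange _
  have heRT : ∀ t ∈ T, eR t = 1 := by
    intro t ht
    rw [heRdef]
    simp only
    have h2 : (e₁ t).re = 1 := by
      rw [he₁def]
      simp only [Complex.ofReal_re]
      rw [heT t ht]
      simp
    rw [h2]
    have : cl 1 = 1 := by
      rw [hcldef]
      simp
    rw [this]
    simp
  -- LUC data for eR
  obtain ⟨Ue, hUe, hUeP⟩ := hLUC eR heRA (1/100) (by norm_num)
  set Wn : ℕ → Set G := fun n => Vb n ∩ Ue with hWndef
  have hWmem : ∀ n, Wn n ∈ nhds (1:G) := fun n =>
    Filter.inter_mem (hVb.toHasBasis.mem_of_mem trivial) hUe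
  have hWanti : ∀ {m n : ℕ}, m ≤ n → Wn n ⊆ Wn m := fun {m n} hmn =>
    inter_subset_inter (hVb.antitone hmn) subset_rfl
  have hWsub : ∀ U ∈ nhds (1:G), ∃ n, Wn n ⊆ U := by
    intro U hU
    obtain ⟨n, -, hn⟩ := hVb.toHasBasis.mem_iff.mp hU
    exact ⟨n, (inter_subset_left).trans hn⟩
  have heRanchor : ∀ t ∈ T, ∀ n : ℕ, ∀ u ∈ Wn n, ‖eR (u * t) - 1‖ ≤ 1/100 := by
    intro t ht n u hu
    have h1 := hUeP (u * t) t (by rw [mul_inv_cancel_right]; exact hu.2)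
    rw [heRT t ht] at h1
    exact le_of_lt h1
    -- ############ the Boolean chain of witnessed subsets ############
  set ind : Set ↥T → ↥T → ℝ := fun S t => if t ∈ S then 1 else 0 with hinddef
  have hind01 : ∀ (S : Set ↥T) (t : ↥T), ind S t = 0 ∨ ind S t = 1 := by
    intro S t
    rw [hinddef]
    by_cases h : t ∈ S
    · right; simp [h]
    · left; simp [h]
  have hindr : ∀ (S : Set ↥T) (t : ↥T), 0 ≤ ind S t ∧ ind S t ≤ 1 := by
    intro S t
    rcases hind01 S t with h | h <;> rw [h] <;> norm_num
  have hindc : ∀ (S : Set ↥T) (t : ↥T), ind Sᶜ t = 1 - ind S t := by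
    intro S t
    rw [hinddef]
    by_cases h : t ∈ S <;> simp [h]
  have hindi : ∀ (S S' : Set ↥T) (t : ↥T), ind (S ∩ S') t = ind S t * ind S' t := by
    intro S S' t
    rw [hinddef]
    by_cases h1 : t ∈ S <;> by_cases h2 : t ∈ S' <;> simp [h1, h2]
  set ℬ : ℕ → Set (Set ↥T) := fun n => {S : Set ↥T | ∃ χ, χ ∈ A ∧
    (∀ s, (χ s).im = 0 ∧ 0 ≤ (χ s).re ∧ (χ s).re ≤ 1) ∧
    (∀ t : ↥T, ∀ u ∈ Wn n, |(χ (u * (t:G))).re - ind S t| ≤ 1/8)}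
    with hBBdef
  -- one boosting step with the cubic polynomial
  have hstepP : ∀ (n : ℕ) (S : Set ↥T) (d : ℝ) (χ : G → ℂ), χ ∈ A →
      (∀ s, (χ s).im = 0 ∧ 0 ≤ (χ s).re ∧ (χ s).re ≤ 1) →
      (∀ t : ↥T, ∀ u ∈ Wn n, |(χ (u * (t:G))).re - ind S t| ≤ d) →
      ∃ χ', χ' ∈ A ∧ (∀ s, (χ' s).im = 0 ∧ 0 ≤ (χ' s).re ∧ (χ' s).re ≤ 1) ∧
      (∀ t : ↥T, ∀ u ∈ Wn n,
        |(χ' (u * (t:G))).re - ind S t| ≤ 3 * d^2) := by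
    intro n S d χ hχA hχr hχm
    refine ⟨fun s => ((3*((χ s).re)^2 - 2*((χ s).re)^3 : ℝ) : ℂ),
      hPmem χ hχA (fun s => (hχr s).1), ?_, ?_⟩
    · intro s
      refine ⟨Complex.ofReal_im _, ?_, ?_⟩
      · simp only [Complex.ofReal_re]
        exact (hPrange _ (hχr s).2.1 (hχr s).2.2).1
      · simp only [Complex.ofReal_re]
        exact (hPrange _ (hχr s).2.1 (hχr s).2.2).2
    · intro t u hu
      simp only [Complex.ofReal_re]
      have h1 := hχm t u hu
      have h2 := hPcontr ((χ (u * (t:G))).re) _ (hχr _).2.1 (hχr _).2.2 (hind01 S t)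
      refine le_trans h2 ?_
      have h3 : (((χ (u * (t:G))).re - ind S t))^2 ≤ d^2 := by
        nlinarith [sq_abs (((χ (u * (t:G))).re - ind S t)),
          abs_nonneg (((χ (u * (t:G))).re - ind S t))]
      linarith
  have hchain : Kop.Chain ℬ := by
    constructor
    · -- mono
      intro m n hmn S hS
      obtain ⟨χ, h1, h2, h3⟩ := hS
      exact ⟨χ, h1, h2, fun t u hu => h3 t u (hWanti hmn hu)⟩
    · -- compl
      intro n S hS
      obtain ⟨χ, hχA, hχr, hχm⟩ := hS
      have hdA : eR - χ ∈ A := hsub eR heRA χ hχA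
      have hdim : ∀ s, ((eR - χ) s).im = 0 := by
        intro s
        simp only [Pi.sub_apply, Complex.sub_im, heRim s, (hχr s).1]
        ring
      have hdb : ∀ s, |((eR - χ) s).re| ≤ 2 := by
        intro s
        simp only [Pi.sub_apply, Complex.sub_re]
        rw [abs_le]
        constructor
        · nlinarith [(heRrange s).1, (heRrange s).2, (hχr s).2.1, (hχr s).2.2]
        · nlinarith [(heRrange s).1, (heRrange s).2, (hχr s).2.1, (hχr s).2.2]
      have hc2A : (fun s => ((cl (((eR - χ) s).re) : ℝ) : ℂ)) ∈ A :=
        hcalc _ hdA hdim 2 hdb cl hclcont hcl0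
      have hc2m : ∀ t : ↥T, ∀ u ∈ Wn n,
          |((fun s => ((cl (((eR - χ) s).re) : ℝ) : ℂ)) (u * (t:G))).re - ind Sᶜ t|
            ≤ 27/200 := by
        intro t u hu
        simp only [Complex.ofReal_re]
        refine le_trans (hclproj _ _ (hindr Sᶜ t).1 (hindr Sᶜ t).2) ?_
        have h1 : |((eR (u*(t:G))).re - 1)| ≤ 1/100 := by
          have h1' := heRanchor (t:G) t.2 n u hu
          rw [show (1:ℂ) = ((1:ℝ):ℂ) by norm_num] at h1'
          rwa [hnormre _ 1 (heRim _)] at h1'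
        have h2 := hχm t u hu
        rw [hindc S t]
        simp only [Pi.sub_apply, Complex.sub_re]
        have h4 : (eR (u*(t:G))).re - (χ (u*(t:G))).re - (1 - ind S t) =
            ((eR (u*(t:G))).re - 1) - ((χ (u*(t:G))).re - ind S t) := by
          ring
        rw [h4]
        refine le_trans (habs2 _ _) ?_
        linarith
      have hc2r : ∀ s, (((fun s => ((cl (((eR - χ) s).re) : ℝ) : ℂ)) s).im = 0) ∧
          0 ≤ ((fun s => ((cl (((eR - χ) s).re) : ℝ) : ℂ)) s).re ∧
          ((fun s => ((cl (((eR - χ) s).re) : ℝ) : ℂ)) s).re ≤ 1 := by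
        intro s
        refine ⟨Complex.ofReal_im _, ?_, ?_⟩
        · simp only [Complex.ofReal_re]; exact (hclrange _).1
        · simp only [Complex.ofReal_re]; exact (hclrange _).2
      obtain ⟨χ', g1, g2, g3⟩ := hstepP n Sᶜ (27/200) _ hc2A hc2r hc2m
      exact ⟨χ', g1, g2, fun t u hu => le_trans (g3 t u hu) (by norm_num)⟩
    · -- inter
      intro n S S' hS hS'
      obtain ⟨χ, hχA, hχr, hχm⟩ := hS
      obtain ⟨ψ, hψA, hψr, hψm⟩ := hS'
      have hprodA : χ * ψ ∈ A := hmul χ hχA ψ hψA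
      have hprodim : ∀ s, ((χ*ψ) s).im = 0 := by
        intro s
        simp [Pi.mul_apply, Complex.mul_im, (hχr s).1, (hψr s).1]
      have hprodre : ∀ s, ((χ*ψ) s).re = (χ s).re * (ψ s).re := by
        intro s
        simp [Pi.mul_apply, Complex.mul_re, (hχr s).1, (hψr s).1]
      have hprodr : ∀ s, (((χ*ψ) s).im = 0) ∧ 0 ≤ ((χ*ψ) s).re ∧ ((χ*ψ) s).re ≤ 1 := by
        intro s
        refine ⟨hprodim s, ?_, ?_⟩
        · rw [hprodre s]
          exact mul_nonneg (hχr s).2.1 (hψr s).2.1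
        · rw [hprodre s]
          nlinarith [(hχr s).2.1, (hχr s).2.2, (hψr s).2.1, (hψr s).2.2]
      have hprodm : ∀ t : ↥T, ∀ u ∈ Wn n,
          |((χ*ψ) (u * (t:G))).re - ind (S ∩ S') t| ≤ 1/4 := by
        intro t u hu
        rw [hprodre, hindi S S' t]
        have m1 := hχm t u hu
        have m2 := hψm t u hu
        have hx : |(χ (u*(t:G))).re| ≤ 1 :=
          abs_le.mpr ⟨by linarith [(hχr (u*(t:G))).2.1], (hχr (u*(t:G))).2.2⟩
        have hc : |ind S' t| ≤ 1 := abs_le.mpr ⟨by linarith [(hindr S' t).1], (hindr S' t).2⟩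
        have key : (χ (u*(t:G))).re * (ψ (u*(t:G))).re - ind S t * ind S' t =
            (χ (u*(t:G))).re * ((ψ (u*(t:G))).re - ind S' t) +
            ((χ (u*(t:G))).re - ind S t) * ind S' t := by
          ring
        rw [key]
        refine le_trans (abs_add_le _ _) ?_
        rw [abs_mul, abs_mul]
        have e1 : |(χ (u*(t:G))).re| * |(ψ (u*(t:G))).re - ind S' t| ≤
            1 * (1/8) := mul_le_mul hx m2 (abs_nonneg _) zero_le_one
        have e2 : |(χ (u*(t:G))).re - ind S t| * |ind S' t| ≤ (1/8) * 1 :=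
          mul_le_mul m1 hc (abs_nonneg _) (by norm_num)
        linarith
      obtain ⟨χ₂, g1, g2, g3⟩ := hstepP n (S ∩ S') (1/4) _ hprodA hprodr hprodm
      have g3' : ∀ t : ↥T, ∀ u ∈ Wn n,
          |(χ₂ (u * (t:G))).re - ind (S ∩ S') t| ≤ 3/16 :=
        fun t u hu => le_trans (g3 t u hu) (by norm_num)
      obtain ⟨χ₃, k1, k2, k3⟩ := hstepP n (S ∩ S') (3/16) _ g1 g2 g3'
      exact ⟨χ₃, k1, k2, fun t u hu => le_trans (k3 t u hu) (by norm_num)⟩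
    · -- cover
      intro S
      set g : G → ℂ :=
        fun s => if h : s ∈ T then ((ind S ⟨s, h⟩ : ℝ) : ℂ) else 0 with hgdef
      have hgb : ∃ M : ℝ, ∀ t ∈ T, ‖g t‖ ≤ M := by
        refine ⟨1, fun t ht => ?_⟩
        rw [hgdef]
        simp only [dif_pos ht]
        rw [Complex.norm_real, Real.norm_eq_abs]
        exact abs_le.mpr ⟨by linarith [(hindr S ⟨t, ht⟩).1], (hindr S ⟨t, ht⟩).2⟩
      obtain ⟨χ₀, hχ₀A, hχ₀T⟩ := hinterp g hgb
      have hχ₁A' : (fun s => (((χ₀ s).re : ℝ) : ℂ)) ∈ A := hre χ₀ hχ₀A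
      obtain ⟨-, M, hM⟩ := hCB _ hχ₁A'
      have hχ₁A : (fun s => ((cl ((χ₀ s).re) : ℝ) : ℂ)) ∈ A := by
        have h1 := hcalc _ hχ₁A' (fun s => by simp) M
          (fun s => le_trans (Complex.abs_re_le_norm _)
            (hM s)) cl hclcont hcl0
        have h2 : (fun s => ((cl (((fun s' => (((χ₀ s').re : ℝ) : ℂ)) s).re) : ℝ) : ℂ)) =
            (fun s => ((cl ((χ₀ s).re) : ℝ) : ℂ)) := by
          funext s
          simp
        rwa [h2] at h1
      obtain ⟨U, hU, hUP⟩ := hLUC _ hχ₁A (1/8) (by norm_num)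
      obtain ⟨n, hn⟩ := hWsub U hU
      refine ⟨n, (fun s => ((cl ((χ₀ s).re) : ℝ) : ℂ)), hχ₁A, ?_, ?_⟩
      · intro s
        refine ⟨Complex.ofReal_im _, ?_, ?_⟩
        · simp only [Complex.ofReal_re]; exact (hclrange _).1
        · simp only [Complex.ofReal_re]; exact (hclrange _).2
      · intro t u hu
        have h1 : ‖((cl ((χ₀ (u * (t:G))).re) : ℝ) : ℂ) - ((cl ((χ₀ (t:G)).re) : ℝ) : ℂ)‖
            < 1/8 := hUP _ _ (by rw [mul_inv_cancel_right]; exact hn hu)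
        have h2 : (χ₀ (t:G)).re = ind S t := by
          have h3 : χ₀ (t:G) = g (t:G) := hχ₀T (t:G) t.2
          rw [hgdef] at h3
          simp only [dif_pos t.2] at h3
          rw [h3]
          rw [Subtype.coe_eta t t.2]
          simp
        have h5 : cl ((χ₀ (t:G)).re) = ind S t := by
          rw [h2]
          rcases hind01 S t with h | h <;> rw [h]
          · exact hcl0
          · rw [hcldef]; simp
        rw [h5] at h1
        simp only [Complex.ofReal_re]
        have h6 : ((cl ((χ₀ (u * (t:G))).re) : ℝ) : ℂ) - ((ind S t : ℝ) : ℂ) =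
            (((cl ((χ₀ (u * (t:G))).re) - ind S t : ℝ)) : ℂ) := by
          push_cast
          ring
        rw [h6] at h1
        rw [Complex.norm_real, Real.norm_eq_abs] at h1
        exact le_of_lt h1
    -- ############ uniform level via the chain theorem ############
  obtain ⟨N, hNfull⟩ := hchain.eventually_full
  -- boosting to arbitrary accuracy at the fixed level N
  have hboost : ∀ (S : Set ↥T) (η : ℝ), 0 < η → ∃ χ, χ ∈ A ∧
      (∀ s, (χ s).im = 0 ∧ 0 ≤ (χ s).re ∧ (χ s).re ≤ 1) ∧
      ∀ t : ↥T, ∀ u ∈ Wn N, |(χ (u * (t:G))).re - ind S t| ≤ η := by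
    intro S η hη
    have hit : ∀ k : ℕ, ∃ χ, χ ∈ A ∧
        (∀ s, (χ s).im = 0 ∧ 0 ≤ (χ s).re ∧ (χ s).re ≤ 1) ∧
        ∀ t : ↥T, ∀ u ∈ Wn N, |(χ (u * (t:G))).re - ind S t| ≤ (1/8) * (3/8)^k := by
      intro k
      induction k with
      | zero =>
        obtain ⟨χ, h1, h2, h3⟩ := hNfull S
        exact ⟨χ, h1, h2, fun t u hu => by
          simpa [pow_zero, mul_one] using h3 t u hu⟩
      | succ k ih =>
        obtain ⟨χ, h1, h2, h3⟩ := ih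
        obtain ⟨χ', g1, g2, g3⟩ := hstepP N S _ χ h1 h2 h3
        refine ⟨χ', g1, g2, fun t u hu => le_trans (g3 t u hu) ?_⟩
        have hpk : (0:ℝ) ≤ (3/8)^k := by positivity
        have hple : ((3:ℝ)/8)^k ≤ 1 := pow_le_one₀ (by norm_num) (by norm_num)
        have hp2 : ((3:ℝ)/8)^k * ((3:ℝ)/8)^k ≤ (3/8)^k := by
          nlinarith [mul_nonneg hpk (by linarith : (0:ℝ) ≤ 1 - (3/8:ℝ)^k)]
        rw [pow_succ]
        calc 3 * ((1/8) * (3/8:ℝ)^k)^2 = (3/64) * ((3/8)^k * (3/8)^k) := by ring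
          _ ≤ (3/64) * (3/8)^k := by nlinarith [hp2]
          _ = 1/8 * ((3/8)^k * (3/8)) := by ring
    obtain ⟨k, hk⟩ : ∃ k : ℕ, (1/8:ℝ) * (3/8)^k ≤ η := by
      obtain ⟨k, hk⟩ := exists_pow_lt_of_lt_one (show (0:ℝ) < 8*η by linarith)
        (show (3/8:ℝ) < 1 by norm_num)
      refine ⟨k, ?_⟩
      nlinarith [hk]
    obtain ⟨χ, h1, h2, h3⟩ := hit k
    exact ⟨χ, h1, h2, fun t u hu => le_trans (h3 t u hu) hk⟩
  -- ############ final assembly ############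
  refine ⟨Wn N, hWmem N, ?_⟩
  intro f hf
  obtain ⟨net, hnetsub, hnetfin, hnetcov⟩ :=
    ((isCompact_sphere (0:ℂ) 1).totallyBounded).exists_subset
      (Metric.dist_mem_uniformity (show (0:ℝ) < ε/4 by positivity))
  have hchoosef : ∀ t : ↥T, ∃ w ∈ net, dist (f (t:G)) w < ε/4 := by
    intro t
    have hmem : f (t:G) ∈ Metric.sphere (0:ℂ) 1 := by
      rw [mem_sphere_zero_iff_norm]
      exact hf (t:G) t.2
    have h1 := hnetcov hmem
    rw [mem_iUnion₂] at h1
    obtain ⟨w, hw, hd⟩ := h1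
    exact ⟨w, hw, hd⟩
  choose rr hrnet hrdist using hchoosef
  set netF := hnetfin.toFinset with hnetFdef
  obtain ⟨q, hqdef⟩ : ∃ q : ℕ, netF.card = q := ⟨netF.card, rfl⟩
  obtain ⟨η, hηdef, hηpos⟩ : ∃ η : ℝ, η = ε/(4*((q:ℝ)+1)) ∧ 0 < η :=
    ⟨_, rfl, div_pos hε (by positivity)⟩
  choose χw hχwA hχwR hχwM using fun w : ℂ => hboost {t : ↥T | rr t = w} η hηpos
  refine ⟨∑ w ∈ netF, w • χw w, ?_, ?_⟩
  · refine Finset.sum_induction _ (· ∈ A) (fun a b ha hb => hadd a ha b hb) hzero ?_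
    intro w _
    exact hsmul w _ (hχwA w)
  intro t ht u hu
  set tt : ↥T := ⟨t, ht⟩ with httdef
  have hEval : (∑ w ∈ netF, w • χw w) (u * t) = ∑ w ∈ netF, w * χw w (u * t) := by
    rw [Finset.sum_apply]
    simp [Pi.smul_apply, smul_eq_mul]
  have hrmem : rr tt ∈ netF := hnetfin.mem_toFinset.mpr (hrnet tt)
  have hIdeal : ∑ w ∈ netF, w * ((ind {t' : ↥T | rr t' = w} tt : ℝ) : ℂ) = rr tt := by
    rw [Finset.sum_eq_single (rr tt)]
    · have : ind {t' : ↥T | rr t' = rr tt} tt = 1 := by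
        rw [hinddef]
        simp [Set.mem_setOf_eq]
      rw [this]
      simp
    · intro w hw hne
      have hno : ind {t' : ↥T | rr t' = w} tt = 0 := by
        rw [hinddef]
        simp only [Set.mem_setOf_eq]
        rw [if_neg (fun hcon => hne hcon.symm)]
      rw [hno]
      simp
    · intro hmem
      exact absurd hrmem hmem
  have hkey : ‖(∑ w ∈ netF, w • χw w) (u * t) - rr tt‖ ≤ q * η := by
    rw [hEval, ← hIdeal, ← Finset.sum_sub_distrib]
    refine le_trans (norm_sum_le _ _) ?_
    have hterm : ∀ w ∈ netF,
        ‖w * χw w (u * t) - w * ((ind {t' : ↥T | rr t' = w} tt : ℝ) : ℂ)‖ ≤ η := by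
      intro w hw
      rw [← mul_sub, norm_mul]
      have hwn : ‖w‖ = 1 := by
        have h1 := hnetsub (hnetfin.mem_toFinset.mp hw)
        rwa [mem_sphere_zero_iff_norm] at h1
      rw [hwn, one_mul]
      rw [hnormre _ _ ((hχwR w (u * t)).1)]
      exact hχwM w tt u hu
    calc ∑ w ∈ netF, ‖w * χw w (u * t) - w * ((ind {t' : ↥T | rr t' = w} tt : ℝ) : ℂ)‖
        ≤ ∑ _w ∈ netF, η := Finset.sum_le_sum hterm
      _ = q * η := by
          rw [Finset.sum_const, nsmul_eq_mul, hqdef]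
  have h2 : ‖rr tt - f t‖ < ε/4 := by
    have h1 := hrdist tt
    rw [dist_comm, Complex.dist_eq] at h1
    exact h1
  have h3 : (q:ℝ) * η ≤ ε/4 := by
    rw [hηdef]
    have hq1 : (q:ℝ) ≤ (q:ℝ) + 1 := by linarith
    calc (q:ℝ) * (ε/(4*((q:ℝ)+1))) = ε * ((q:ℝ)/(4*((q:ℝ)+1))) := by ring
      _ ≤ ε * (1/4) := by
          apply mul_le_mul_of_nonneg_left ?_ (le_of_lt hε)
          rw [div_le_div_iff₀ (by positivity) (by norm_num)]
          linarith
      _ = ε/4 := by ring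
  have h4 : ‖(∑ w ∈ netF, w • χw w) (u * t) - f t‖ ≤
      ‖(∑ w ∈ netF, w • χw w) (u * t) - rr tt‖ + ‖rr tt - f t‖ := by
    have hsplit : (∑ w ∈ netF, w • χw w) (u * t) - f t =
        ((∑ w ∈ netF, w • χw w) (u * t) - rr tt) + (rr tt - f t) := by
      ring
    rw [hsplit]
    exact norm_add_le _ _
  have h5 : ‖(∑ w ∈ netF, w • χw w) (u * t) - f t‖ < ε/4 + ε/4 := by
    have := le_trans hkey h3
    linarith
  linarith
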